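/- Let L > 1, A > 0, K > 0, and let y : [0, K] → [0, ∞) be a nonincreasing, locally absolutely continuous function with y(k) > 0 for 0 ≤ k < K and y(k) ≤ A · (−y′(k))^L for almost every k ∈ (0, K). Then K ≤ (L/(L−1)) · A^{1/L} · y(0)^{(L−1)/L}. -/

import Mathlib

open MeasureTheory Set intervalIntegral


private lemma level_set_ode_aux (L A r y0 : ℝ) (hL : 1 < L) (hA : 0 < A) (hy0 : 0 < y0)
    (hr0 : 0 < r) (hr1 : r < 1) (m : ℕ) :
    (y0 * r ^ m - y0 * r ^ (m+1)) * (A / (y0 * r ^ (m+1))) ^ (1/L)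
      = (A ^ (1/L) * y0 ^ ((L-1)/L) * (1 - r) / r ^ (1/L)) * (r ^ ((L-1)/L)) ^ m := by
  have hL0 : (0:ℝ) < L := by linarith
  set α : ℝ := (L-1)/L with hα
  have hnp : ∀ n : ℕ, (r:ℝ) ^ n = r ^ (n:ℝ) := fun n => (Real.rpow_natCast r n).symm
  have hwm : (r ^ α) ^ m = r ^ (α * (m:ℝ)) := by
    rw [← Real.rpow_natCast (r ^ α) m, ← Real.rpow_mul hr0.le]
  have hsplit : (A / (y0 * r ^ (m+1))) ^ (1/L)
      = A ^ (1/L) / (y0 ^ ((1:ℝ)/L) * r ^ (((m:ℝ)+1) * (1/L))) := by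
    rw [Real.div_rpow hA.le (by positivity), Real.mul_rpow hy0.le (by positivity),
      hnp (m+1), ← Real.rpow_mul hr0.le]
    push_cast
    ring_nf
  have e1 : y0 * r ^ m - y0 * r ^ (m+1) = (1-r) * (y0 * r ^ (m:ℝ)) := by
    rw [← hnp m]; ring
  rw [hsplit, e1, hwm]
  have p1 : (0:ℝ) < y0 ^ ((1:ℝ)/L) := Real.rpow_pos_of_pos hy0 _
  have p2 : (0:ℝ) < r ^ (((m:ℝ)+1) * (1/L)) := Real.rpow_pos_of_pos hr0 _
  have p3 : (0:ℝ) < r ^ ((1:ℝ)/L) := Real.rpow_pos_of_pos hr0 _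
  have ey : y0 * (y0 ^ ((1:ℝ)/L))⁻¹ = y0 ^ α := by
    rw [← Real.rpow_neg hy0.le]
    nth_rewrite 1 [← Real.rpow_one y0]
    rw [← Real.rpow_add hy0]
    congr 1
    rw [hα]; field_simp; ring
  have er : r ^ (m:ℝ) * (r ^ (((m:ℝ)+1) * (1/L)))⁻¹ = r ^ (α * (m:ℝ)) * (r ^ ((1:ℝ)/L))⁻¹ := by
    rw [← Real.rpow_neg hr0.le, ← Real.rpow_neg hr0.le, ← Real.rpow_add hr0,
      ← Real.rpow_add hr0]
    congr 1
    rw [hα]; field_simp; ring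
  field_simp
  have hy1 : y0 ^ α * y0 ^ ((1:ℝ)/L) = y0 := by
    rw [← Real.rpow_add hy0]
    nth_rewrite 2 [← Real.rpow_one y0]
    congr 1
    rw [hα]; field_simp; ring
  have hr3 : r ^ (α * (m:ℝ)) * r ^ (((m:ℝ)+1) / L) = r ^ ((m:ℝ)) * r ^ ((1:ℝ)/L) := by
    rw [← Real.rpow_add hr0, ← Real.rpow_add hr0]
    congr 1
    rw [hα]; field_simp; ring
  rw [mul_comm (m:ℝ) α]
  linear_combination (-((1 - r) * y0)) * hr3 +
    (-((1 - r) * (r^(α*(m:ℝ)) * r^(((m:ℝ)+1)/L)))) * hy1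


/-- **Level-set ODE lemma**: if `y : [0, K] → [0, ∞)` is nonincreasing, (locally) absolutely
continuous — encoded by an integrable a.e. derivative `y'` together with the fundamental
theorem of calculus — positive on `[0, K)`, and satisfies `y(k) ≤ A (−y′(k))^L` for a.e.
`k ∈ (0, K)` with `L > 1`, then `K ≤ (L/(L−1)) A^{1/L} y(0)^{(L−1)/L}`. -/
theorem level_set_ode (L A K : ℝ) (hL : 1 < L) (hA : 0 < A) (hK : 0 < K)
    (y y' : ℝ → ℝ)
    (hmono : AntitoneOn y (Set.Icc 0 K))
    (hnn : ∀ k ∈ Set.Icc 0 K, 0 ≤ y k)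
    (hpos : ∀ k : ℝ, 0 ≤ k → k < K → 0 < y k)
    (hint : IntegrableOn y' (Set.Icc 0 K))
    (hftc : ∀ k ∈ Set.Icc 0 K, y k = y 0 + ∫ t in (0 : ℝ)..k, y' t)
    (hode : ∀ᵐ k ∂(volume : Measure ℝ), k ∈ Set.Ioo 0 K → y k ≤ A * (-y' k) ^ L) :
    K ≤ L / (L - 1) * A ^ (1 / L) * y 0 ^ ((L - 1) / L) := by
  have hii : ∀ a b, a ∈ Set.Icc 0 K → b ∈ Set.Icc 0 K → IntervalIntegrable y' volume a b := by
    intro a b ha hb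
    apply IntegrableOn.intervalIntegrable
    apply hint.mono_set
    have h2 : Set.uIcc a b ⊆ Set.uIcc 0 K :=
      Set.uIcc_subset_uIcc (by rwa [Set.uIcc_of_le hK.le]) (by rwa [Set.uIcc_of_le hK.le])
    rwa [Set.uIcc_of_le hK.le] at h2
  have hcont : ContinuousOn y (Set.Icc 0 K) := by
    have h1 : ContinuousOn (fun k => y 0 + ∫ t in (0:ℝ)..k, y' t) (Set.Icc 0 K) := by
      apply continuousOn_const.add
      have := intervalIntegral.continuousOn_primitive_interval
        (a := 0) (b := K) (μ := volume) (f := y')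
      rw [Set.uIcc_of_le hK.le] at this
      exact this hint
    exact ContinuousOn.congr h1 hftc
  have hsign : ∀ᵐ k ∂(volume : Measure ℝ), k ∈ Set.Ioo 0 K → y' k ≤ 0 := by
    set f : ℝ → ℝ := (Set.Icc 0 K).indicator y' with hf
    have hfint : Integrable f := by
      rw [hf, integrable_indicator_iff measurableSet_Icc]; exact hint
    have hfl : LocallyIntegrable f volume := hfint.locallyIntegrable
    filter_upwards [IsUnifLocDoublingMeasure.ae_tendsto_average (μ := volume) hfl 1]
      with x hx hxI
    have h1 : Filter.Tendsto (fun δ : ℝ => ⨍ t in Metric.closedBall x δ, f t)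
        (nhdsWithin 0 (Set.Ioi 0)) (nhds (f x)) := by
      apply hx (fun _ => x) id Filter.tendsto_id
      filter_upwards [self_mem_nhdsWithin] with δ (hδ : (0:ℝ) < δ)
      exact Metric.mem_closedBall_self (by simpa using hδ.le)
    have hfx : f x ≤ 0 := by
      refine le_of_tendsto h1 ?_
      have hmem : Set.Ioo (0:ℝ) (min x (K - x)) ∈ nhdsWithin (0:ℝ) (Set.Ioi 0) :=
        Ioo_mem_nhdsGT_of_mem ⟨le_rfl, lt_min hxI.1 (by linarith [hxI.2])⟩
      filter_upwards [hmem] with δ hδ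
      have hδ0 : 0 < δ := hδ.1
      have hsub : Set.Icc (x - δ) (x + δ) ⊆ Set.Icc 0 K := by
        apply Set.Icc_subset_Icc
        · have := lt_min_iff.mp hδ.2; linarith [this.1]
        · have := lt_min_iff.mp hδ.2; linarith [this.2]
      have hxm : x - δ ∈ Set.Icc 0 K := hsub ⟨by linarith, by linarith⟩
      have hxp : x + δ ∈ Set.Icc 0 K := hsub ⟨by linarith, by linarith⟩
      rw [setAverage_eq, smul_eq_mul]
      apply mul_nonpos_of_nonneg_of_nonpos (by positivity)
      have : ∫ t in Metric.closedBall x δ, f t = ∫ t in (x - δ)..(x + δ), y' t := by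
        rw [Real.closedBall_eq_Icc, hf, setIntegral_indicator measurableSet_Icc,
          Set.inter_eq_self_of_subset_left hsub, intervalIntegral.integral_of_le (by linarith),
          integral_Icc_eq_integral_Ioc]
      rw [this]
      have heq : ∫ t in (x - δ)..(x + δ), y' t = y (x + δ) - y (x - δ) := by
        rw [hftc _ hxp, hftc _ hxm]
        have := intervalIntegral.integral_interval_sub_left (hii 0 (x + δ) ⟨le_rfl, hK.le⟩ hxp)
          (hii 0 (x - δ) ⟨le_rfl, hK.le⟩ hxm)
        rw [← this]; ring
      rw [heq, sub_nonpos]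
      exact hmono hxm hxp (by linarith)
    rwa [hf, Set.indicator_of_mem (Set.Ioo_subset_Icc_self hxI)] at hfx
  have key : ∀ a b : ℝ, 0 ≤ a → a ≤ b → b ≤ K →
      (b - a) * (y b / A) ^ (1/L) ≤ y a - y b := by
    intro a b ha hab hbK
    have hL0 : (0:ℝ) < L := by linarith
    have haI : a ∈ Icc 0 K := ⟨ha, hab.trans hbK⟩
    have hbI : b ∈ Icc 0 K := ⟨ha.trans hab, hbK⟩
    have hyb : 0 ≤ y b := hnn b hbI
    have heq : y a - y b = ∫ t in Set.Ioo a b, (-y' t) := by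
      have h1 : y b - y a = ∫ t in a..b, y' t := by
        rw [hftc _ hbI, hftc _ haI]
        rw [← intervalIntegral.integral_interval_sub_left (hii 0 b ⟨le_rfl, hK.le⟩ hbI)
          (hii 0 a ⟨le_rfl, hK.le⟩ haI)]
        ring
      have h2 : ∫ t in a..b, y' t = ∫ t in Set.Ioo a b, y' t := by
        rw [intervalIntegral.integral_of_le hab, ← integral_Ioc_eq_integral_Ioo]
      rw [MeasureTheory.integral_neg, ← h2, ← h1]; ring
    rw [heq]
    have hc : ∫ t in Set.Ioo a b, (y b / A) ^ (1/L) ∂volume = (b - a) * (y b / A) ^ (1/L) := by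
      rw [setIntegral_const, Real.volume_real_Ioo_of_le hab, smul_eq_mul]
    rw [← hc]
    apply setIntegral_mono_ae_restrict
    · exact integrableOn_const measure_Ioo_lt_top.ne
    · exact ((hint.mono_set (fun t ht => ⟨ha.trans ht.1.le, ht.2.le.trans hbK⟩ : Set.Ioo a b ⊆ Icc 0 K)).neg)
    · rw [Filter.EventuallyLE, ae_restrict_iff' measurableSet_Ioo]
      filter_upwards [hode, hsign] with t hodet hsignt ht
      have htI : t ∈ Set.Ioo 0 K := ⟨lt_of_le_of_lt ha ht.1, lt_of_lt_of_le ht.2 hbK⟩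
      have hyt : 0 < y t := hpos t htI.1.le htI.2
      have hx0 : 0 ≤ -y' t := by linarith [hsignt htI]
      have hxpos : 0 < -y' t := by
        rcases lt_or_eq_of_le hx0 with h | h
        · exact h
        · exfalso
          have := hodet htI
          rw [← h, Real.zero_rpow (ne_of_gt hL0), mul_zero] at this
          linarith
      have h3 : y t / A ≤ (-y' t) ^ L := by
        rw [div_le_iff₀ hA]
        calc y t ≤ A * (-y' t) ^ L := hodet htI
          _ = (-y' t) ^ L * A := by ring
      have h4 : (y t / A) ^ (1/L) ≤ ((-y' t) ^ L) ^ (1/L) :=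
        Real.rpow_le_rpow (by positivity) h3 (by positivity)
      have h5 : ((-y' t) ^ L) ^ (1/L) = -y' t := by
        rw [← Real.rpow_mul hx0, mul_one_div, div_self (ne_of_gt hL0), Real.rpow_one]
      have h6 : (y b / A) ^ (1/L) ≤ (y t / A) ^ (1/L) := by
        apply Real.rpow_le_rpow (by positivity) _ (by positivity)
        exact div_le_div_of_nonneg_right (hmono ⟨htI.1.le, htI.2.le⟩ hbI ht.2.le) hA.le
      linarith
  have hL0 : (0:ℝ) < L := by linarith
  have hy0 : 0 < y 0 := hpos 0 le_rfl hK
  set α : ℝ := (L - 1) / L with hα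
  have hα0 : 0 < α := div_pos (by linarith) hL0
  have hα1 : α < 1 := by rw [hα, div_lt_one hL0]; linarith
  have main : ∀ r : ℝ, 0 < r → r < 1 →
      K ≤ A ^ (1/L) * y 0 ^ α * ((1 - r) / (1 - r ^ α) / r ^ (1/L)) := by
    intro r hr0 hr1
    set w : ℝ := r ^ α with hw
    have hw0 : 0 < w := Real.rpow_pos_of_pos hr0 α
    have hw1 : w < 1 := by
      rw [hw]; exact Real.rpow_lt_one hr0.le hr1 hα0
    set E : ℝ := A ^ (1/L) * y 0 ^ α * (1 - r) / r ^ (1/L) with hE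
    have hE0 : 0 < E := by
      apply div_pos (mul_pos (mul_pos _ _) _) (Real.rpow_pos_of_pos hr0 _)
      · exact Real.rpow_pos_of_pos hA _
      · exact Real.rpow_pos_of_pos hy0 _
      · linarith
    set v : ℕ → ℝ := fun m => y 0 * r ^ m with hv
    have hvpos : ∀ m, 0 < v m := fun m => mul_pos hy0 (pow_pos hr0 m)
    have hvmono : ∀ m, v (m+1) ≤ v m := by
      intro m
      simp only [hv, pow_succ]
      have h := mul_pos hy0 (pow_pos hr0 m)
      nlinarith [h]
    -- the per-term identity
    have hterm : ∀ m : ℕ, (v m - v (m+1)) * (A / v (m+1)) ^ (1/L) = E * w ^ m := by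
      intro m
      have := level_set_ode_aux L A r (y 0) hL hA hy0 hr0 hr1 m
      rw [← hα] at this
      simpa only [hv, hE, hw] using this
    -- level-set times
    set S : ℕ → Set ℝ := fun m => {t ∈ Set.Icc 0 K | y t ≤ v m} with hS
    have hSclosed : ∀ m, IsClosed (S m) := by
      intro m
      have : S m = Set.Icc 0 K ∩ y ⁻¹' (Set.Iic (v m)) := by
        ext t; simp [hS, Set.mem_sep_iff, and_comm]
      rw [this]
      exact hcont.preimage_isClosed_of_isClosed isClosed_Icc isClosed_Iic
    set T : ℕ → ℝ := fun m => sInf (S m ∪ {K}) with hT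
    have hTne : ∀ m, (S m ∪ {K}).Nonempty := fun m => ⟨K, Or.inr rfl⟩
    have hTbdd : ∀ m, BddBelow (S m ∪ {K}) := by
      intro m
      refine ⟨0, fun t ht => ?_⟩
      rcases ht with ht | ht
      · exact ht.1.1
      · rw [Set.mem_singleton_iff.mp ht]; exact hK.le
    have hTmem : ∀ m, T m ∈ S m ∪ {K} :=
      fun m => ((hSclosed m).union isClosed_singleton).csInf_mem (hTne m) (hTbdd m)
    have hTicc : ∀ m, T m ∈ Set.Icc 0 K := by
      intro m
      rcases hTmem m with h | h
      · exact h.1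
      · rw [Set.mem_singleton_iff.mp h]; exact ⟨hK.le, le_rfl⟩
    have hT0 : T 0 = 0 := by
      apply le_antisymm _ (hTicc 0).1
      apply csInf_le (hTbdd 0)
      left
      exact ⟨⟨le_rfl, hK.le⟩, by simp [hv]⟩
    have hTmono : ∀ m, T m ≤ T (m+1) := by
      intro m
      apply le_csInf (hTne (m+1))
      intro t ht
      apply csInf_le (hTbdd m)
      rcases ht with ht | ht
      · exact Or.inl ⟨ht.1, ht.2.trans (hvmono m)⟩
      · exact Or.inr ht
    -- y (T (m+1)) ≥ v (m+1)
    have hTlow : ∀ m : ℕ, v m ≤ y (T m) := by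
      intro m
      rcases eq_or_lt_of_le (hTicc m).1 with h0 | h0
      · rw [← h0]
        calc v m = y 0 * r ^ m := rfl
          _ ≤ y 0 * 1 := by
              apply mul_le_mul_of_nonneg_left _ hy0.le
              exact pow_le_one₀ hr0.le hr1.le
          _ = y 0 := mul_one _
      · -- T m > 0; use closure of Ico 0 (T m)
        have hC : IsClosed {t ∈ Set.Icc 0 K | v m ≤ y t} := by
          have : {t ∈ Set.Icc 0 K | v m ≤ y t} = Set.Icc 0 K ∩ y ⁻¹' (Set.Ici (v m)) := by
            ext t; simp [Set.mem_sep_iff, and_comm]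
          rw [this]
          exact hcont.preimage_isClosed_of_isClosed isClosed_Icc isClosed_Ici
        have hsub : Set.Ico 0 (T m) ⊆ {t ∈ Set.Icc 0 K | v m ≤ y t} := by
          intro t ht
          have htK : t ∈ Set.Icc 0 K := ⟨ht.1, (ht.2.le.trans (hTicc m).2)⟩
          refine ⟨htK, ?_⟩
          by_contra hlt
          push_neg at hlt
          have : T m ≤ t := csInf_le (hTbdd m) (Or.inl ⟨htK, hlt.le⟩)
          exact absurd ht.2 (not_lt.mpr this)
        have hcl : T m ∈ closure (Set.Ico 0 (T m)) := by
          rw [closure_Ico (ne_of_lt h0)]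
          exact ⟨h0.le, le_rfl⟩
        have h7 := (closure_mono hsub) hcl
        rw [hC.closure_eq] at h7
        exact h7.2
    -- upper estimate on steps
    have hstep : ∀ m : ℕ, T (m+1) - T m ≤ E * w ^ m := by
      intro m
      rcases hTmem m with hm | hm
      · -- T m ∈ S m : y (T m) ≤ v m
        have h1 := key (T m) (T (m+1)) (hTicc m).1 (hTmono m) (hTicc (m+1)).2
        have h2 : y (T m) - y (T (m+1)) ≤ v m - v (m+1) :=
          sub_le_sub hm.2 (hTlow (m+1))
        have h3 : (v (m+1) / A) ^ (1/L) ≤ (y (T (m+1)) / A) ^ (1/L) := by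
          apply Real.rpow_le_rpow (by positivity) _ (by positivity)
          exact div_le_div_of_nonneg_right (hTlow (m+1)) hA.le
        have h4 : (T (m+1) - T m) * (v (m+1) / A) ^ (1/L) ≤ v m - v (m+1) := by
          calc (T (m+1) - T m) * (v (m+1) / A) ^ (1/L)
              ≤ (T (m+1) - T m) * (y (T (m+1)) / A) ^ (1/L) := by
                apply mul_le_mul_of_nonneg_left h3
                linarith [hTmono m]
            _ ≤ y (T m) - y (T (m+1)) := h1
            _ ≤ v m - v (m+1) := h2
        have h5 : (0:ℝ) < (v (m+1) / A) ^ (1/L) :=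
          Real.rpow_pos_of_pos (div_pos (hvpos _) hA) _
        have h6 : T (m+1) - T m ≤ (v m - v (m+1)) / (v (m+1) / A) ^ (1/L) := by
          rw [le_div_iff₀ h5]; exact h4
        calc T (m+1) - T m ≤ (v m - v (m+1)) / (v (m+1) / A) ^ (1/L) := h6
          _ = (v m - v (m+1)) * (A / v (m+1)) ^ (1/L) := by
              have hprod : (v (m+1) / A) ^ (1/L) * (A / v (m+1)) ^ (1/L) = 1 := by
                rw [← Real.mul_rpow (by positivity) (by positivity),
                  show v (m+1) / A * (A / v (m+1)) = 1 by
                    field_simp; exact div_self (hvpos (m+1)).ne']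
                exact Real.one_rpow _
              rw [div_eq_iff (ne_of_gt h5)]
              symm
              calc (v m - v (m+1)) * (A / v (m+1)) ^ (1/L) * (v (m+1) / A) ^ (1/L)
                  = (v m - v (m+1)) * ((v (m+1) / A) ^ (1/L) * (A / v (m+1)) ^ (1/L)) := by ring
                _ = v m - v (m+1) := by rw [hprod, mul_one]
          _ = E * w ^ m := hterm m
      · -- T m = K, so T (m+1) = K as well
        have hmK : T m = K := Set.mem_singleton_iff.mp hm
        have : T (m+1) ≤ K := (hTicc (m+1)).2
        have h2 : T (m+1) - T m ≤ 0 := by rw [hmK]; linarith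
        have : (0:ℝ) ≤ E * w ^ m := by positivity
        linarith
    -- partial sums
    have hsum : ∀ M : ℕ, T M ≤ E / (1 - w) * (1 - w ^ M) := by
      intro M
      induction M with
      | zero => simp [hT0]
      | succ M ih =>
        have h1 := hstep M
        have heq : E / (1 - w) * (1 - w ^ (M+1)) =
            E / (1 - w) * (1 - w ^ M) + E * w ^ M := by
          have hne : (1:ℝ) - w ≠ 0 := ne_of_gt (by linarith)
          field_simp
          ring
        rw [heq]
        linarith
    have hCbound : ∀ M : ℕ, T M ≤ E / (1 - w) := by
      intro M
      calc T M ≤ E / (1 - w) * (1 - w ^ M) := hsum M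
        _ ≤ E / (1 - w) * 1 := by
            apply mul_le_mul_of_nonneg_left _ (le_of_lt (div_pos hE0 (by linarith)))
            have : (0:ℝ) ≤ w ^ M := by positivity
            linarith
        _ = E / (1 - w) := mul_one _
    -- conclude K ≤ E / (1 - w)
    have hKle : K ≤ E / (1 - w) := by
      by_contra hcon
      push_neg at hcon
      set C := E / (1 - w) with hC
      have hC0 : (0:ℝ) ≤ C := hT0 ▸ hCbound 0
      have hyC : 0 < y C := hpos C hC0 hcon
      obtain ⟨m, hm⟩ : ∃ m : ℕ, r ^ m < y C / y 0 := by
        apply exists_pow_lt_of_lt_one (by positivity) hr1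
      have hvm : v m < y C := by
        rw [hv]
        calc y 0 * r ^ m < y 0 * (y C / y 0) := by
              exact mul_lt_mul_of_pos_left hm hy0
          _ = y C := by field_simp
      have hTm : T m ∈ S m := by
        rcases hTmem m with h | h
        · exact h
        · exfalso
          have hmK := Set.mem_singleton_iff.mp h
          have h9 := hCbound m
          rw [hmK] at h9
          linarith
      have h1 : y (T m) ≤ v m := hTm.2
      have h2 : y C ≤ y (T m) := by
        apply hmono (hTicc m) ⟨hC0, hcon.le⟩
        exact (hCbound m).trans_eq rfl
      linarith
    calc K ≤ E / (1 - w) := hKle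
      _ = A ^ (1/L) * y 0 ^ α * ((1 - r) / (1 - r ^ α) / r ^ (1/L)) := by
          rw [hE, hw]; ring
  -- now take the limit r → 1⁻
  have hconst : A ^ (1/L) * y 0 ^ α * (1 / α) = L / (L - 1) * A ^ (1/L) * y 0 ^ ((L-1)/L) := by
    rw [hα, one_div_div]
    ring
  rw [hα] at hconst
  rw [← hconst]
  have heqfun : ∀ r : ℝ, (slope (fun s : ℝ => s ^ α) 1 r)⁻¹ = (1 - r) / (1 - r ^ α) := by
    intro r
    rw [slope_def_field, Real.one_rpow, inv_div, ← neg_div_neg_eq]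
    ring_nf
  have h1 : Filter.Tendsto (fun r : ℝ => (1 - r) / (1 - r ^ α))
      (nhdsWithin 1 (Set.Iio 1)) (nhds (1 / α)) := by
    have hd : HasDerivAt (fun s : ℝ => s ^ α) (α * (1:ℝ) ^ (α - 1)) 1 :=
      Real.hasDerivAt_rpow_const (Or.inl one_ne_zero)
    rw [hasDerivAt_iff_tendsto_slope] at hd
    have hα' : α * (1:ℝ) ^ (α - 1) ≠ 0 := by
      rw [Real.one_rpow, mul_one]; exact ne_of_gt hα0
    have h3 := (hd.inv₀ hα').mono_left
      (nhdsWithin_mono 1 (fun x hx => ne_of_lt hx) : nhdsWithin (1:ℝ) (Set.Iio 1) ≤ nhdsWithin 1 {(1:ℝ)}ᶜ)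
    have h4 : (α * (1:ℝ) ^ (α - 1))⁻¹ = 1 / α := by
      rw [Real.one_rpow, mul_one, one_div]
    rw [h4] at h3
    exact h3.congr (fun r => heqfun r)
  have h2 : Filter.Tendsto (fun r : ℝ => r ^ ((1:ℝ)/L))
      (nhdsWithin 1 (Set.Iio 1)) (nhds 1) := by
    have := (Real.continuousAt_rpow_const 1 (1/L) (Or.inl one_ne_zero)).tendsto
    rw [Real.one_rpow] at this
    exact this.mono_left nhdsWithin_le_nhds
  have htend : Filter.Tendsto (fun r : ℝ => A ^ (1/L) * y 0 ^ α * ((1 - r) / (1 - r ^ α) / r ^ (1/L)))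
      (nhdsWithin 1 (Set.Iio 1)) (nhds (A ^ (1/L) * y 0 ^ α * (1 / α))) := by
    have h5 := h1.div h2 one_ne_zero
    rw [div_one] at h5
    exact h5.const_mul _
  refine ge_of_tendsto htend ?_
  filter_upwards [Ioo_mem_nhdsLT_of_mem (show (1:ℝ) ∈ Set.Ioc 0 1 from ⟨zero_lt_one, le_rfl⟩)]
    with r hr
  exact main r hr.1 hr.2
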